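/- For the two-qubit state X₁ := (2/9)|φ₂⁺⟩⟨φ₂⁺| + (1/9)|01⟩⟨01| + (1/9)|10⟩⟨10| + (5/9)|00⟩⟨00|, the fully entangled fraction satisfies F(X₁) = 1/2; that is, the maximum of ⟨φ₂⁺|(I⊗V)† X₁ (I⊗V)|φ₂⁺⟩ over all 2×2 unitary matrices V equals 1/2. -/
import Mathlib


open Matrix Kronecker Complex
open scoped ComplexOrder

/-- The canonical maximally entangled vector `|ψ⁺⟩ = (1/√d) ∑ᵢ |ii⟩` on `ℂ^d ⊗ ℂ^d`. -/
noncomputable def psiPlus (d : ℕ) : (Fin d × Fin d) → ℂ :=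
  fun p => if p.1 = p.2 then ((Real.sqrt d)⁻¹ : ℝ) else 0

/-- The fully entangled fraction: the supremum over `d × d` unitaries `V` of
`⟨ψ⁺| (I ⊗ V)† ρ (I ⊗ V) |ψ⁺⟩`. -/
noncomputable def fef (d : ℕ) (ρ : Matrix (Fin d × Fin d) (Fin d × Fin d) ℂ) : ℝ :=
  ⨆ V : Matrix.unitaryGroup (Fin d) ℂ,
    (star (psiPlus d) ⬝ᵥ
      ((((1 : Matrix (Fin d) (Fin d) ℂ) ⊗ₖ (V : Matrix (Fin d) (Fin d) ℂ))ᴴ * ρ *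
        ((1 : Matrix (Fin d) (Fin d) ℂ) ⊗ₖ (V : Matrix (Fin d) (Fin d) ℂ))) *ᵥ psiPlus d)).re

/-- A density matrix: positive semidefinite with unit trace. -/
def IsDensityMatrix {n : Type*} [Fintype n] (ρ : Matrix n n ℂ) : Prop :=
  ρ.PosSemidef ∧ ρ.trace = 1

/-- `ρ` has absolute fully entangled fraction: `F(UρU†) ≤ 1/d` for every unitary `U`. -/
def AbsFEF (d : ℕ) (ρ : Matrix (Fin d × Fin d) (Fin d × Fin d) ℂ) : Prop :=
  ∀ U ∈ Matrix.unitaryGroup (Fin d × Fin d) ℂ, fef d (U * ρ * Uᴴ) ≤ 1 / d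

/-- Basis vector `|ij⟩` of `ℂ^d ⊗ ℂ^d`. -/
def ket (d : ℕ) (i j : Fin d) : (Fin d × Fin d) → ℂ :=
  fun p => if p = (i, j) then 1 else 0

/-- Rank-one projector `|v⟩⟨v|`. -/
def proj {n : Type*} (v : n → ℂ) : Matrix n n ℂ :=
  Matrix.vecMulVec v (star v)

/-- The state `X₁ = (2/9)|φ₂⁺⟩⟨φ₂⁺| + (1/9)|01⟩⟨01| + (1/9)|10⟩⟨10| + (5/9)|00⟩⟨00|`. -/
noncomputable def X₁ : Matrix (Fin 2 × Fin 2) (Fin 2 × Fin 2) ℂ :=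
  (2/9 : ℂ) • proj (psiPlus 2) + (1/9 : ℂ) • proj (ket 2 0 1) +
    (1/9 : ℂ) • proj (ket 2 1 0) + (5/9 : ℂ) • proj (ket 2 0 0)

lemma fef_expand (V : Matrix (Fin 2) (Fin 2) ℂ) :
    star (psiPlus 2) ⬝ᵥ
      ((((1 : Matrix (Fin 2) (Fin 2) ℂ) ⊗ₖ V)ᴴ * X₁ *
        ((1 : Matrix (Fin 2) (Fin 2) ℂ) ⊗ₖ V)) *ᵥ psiPlus 2)
    = (1/18) * ((starRingEnd ℂ) (V 0 0 + V 1 1) * (V 0 0 + V 1 1))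
      + (1/18) * ((starRingEnd ℂ) (V 0 1) * V 0 1)
      + (1/18) * ((starRingEnd ℂ) (V 1 0) * V 1 0)
      + (5/18) * ((starRingEnd ℂ) (V 0 0) * V 0 0) := by
  have h2 : ((Real.sqrt 2 : ℝ) : ℂ) * ((Real.sqrt 2 : ℝ) : ℂ) = 2 := by
    norm_cast
    exact Real.mul_self_sqrt (by norm_num)
  have ht : ((Real.sqrt 2 : ℝ) : ℂ)⁻¹ * ((Real.sqrt 2 : ℝ) : ℂ)⁻¹ = 1/2 := by
    rw [← mul_inv, h2]; norm_num
  have hp : (((Real.sqrt 2:ℝ):ℂ))⁻¹ ^ 2 = 1/2 := by rw [sq]; exact ht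
  simp [psiPlus, X₁, proj, ket, Matrix.mul_apply, Matrix.mulVec, dotProduct,
    Matrix.vecMulVec_apply, Matrix.kroneckerMap_apply, Matrix.one_apply, Matrix.conjTranspose_apply,
    Fin.sum_univ_two, Fintype.sum_prod_type, Prod.mk.injEq]
  rw [ht]
  ring_nf
  rw [hp]
  ring

lemma fef_re (V : Matrix (Fin 2) (Fin 2) ℂ) :
    (star (psiPlus 2) ⬝ᵥ
      ((((1 : Matrix (Fin 2) (Fin 2) ℂ) ⊗ₖ V)ᴴ * X₁ *
        ((1 : Matrix (Fin 2) (Fin 2) ℂ) ⊗ₖ V)) *ᵥ psiPlus 2)).re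
    = (Complex.normSq (V 0 0 + V 1 1) + Complex.normSq (V 0 1) + Complex.normSq (V 1 0)
        + 5 * Complex.normSq (V 0 0)) / 18 := by
  rw [fef_expand]
  simp only [← Complex.normSq_eq_conj_mul_self]
  simp [Complex.add_re, Complex.mul_re, Complex.ofReal_re, Complex.ofReal_im]
  norm_num
  ring

lemma fef_bound (V : Matrix.unitaryGroup (Fin 2) ℂ) :
    (star (psiPlus 2) ⬝ᵥ
      ((((1 : Matrix (Fin 2) (Fin 2) ℂ) ⊗ₖ (V : Matrix (Fin 2) (Fin 2) ℂ))ᴴ * X₁ *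
        ((1 : Matrix (Fin 2) (Fin 2) ℂ) ⊗ₖ (V : Matrix (Fin 2) (Fin 2) ℂ))) *ᵥ psiPlus 2)).re ≤ 1/2 := by
  rw [fef_re]
  have hcol : (star (V : Matrix (Fin 2) (Fin 2) ℂ) * V) = 1 := V.2.1
  have hrow : ((V : Matrix (Fin 2) (Fin 2) ℂ) * star (V : Matrix (Fin 2) (Fin 2) ℂ)) = 1 := V.2.2
  have hc1 := congrFun (congrFun hcol 0) 0
  have hc2 := congrFun (congrFun hcol 1) 1
  have hr1 := congrFun (congrFun hrow 0) 0
  simp [Matrix.mul_apply, Fin.sum_univ_two, Matrix.one_apply, Matrix.conjTranspose_apply,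
    Complex.ext_iff, Complex.mul_re, Complex.mul_im] at hc1 hc2 hr1
  simp only [Complex.normSq_apply, Complex.add_re, Complex.add_im]
  nlinarith [sq_nonneg ((V : Matrix (Fin 2) (Fin 2) ℂ) 0 0).re, hc1.1, hc2.1, hr1.1,
    sq_nonneg (((V : Matrix (Fin 2) (Fin 2) ℂ) 0 0).re - ((V : Matrix (Fin 2) (Fin 2) ℂ) 1 1).re),
    sq_nonneg (((V : Matrix (Fin 2) (Fin 2) ℂ) 0 0).im - ((V : Matrix (Fin 2) (Fin 2) ℂ) 1 1).im),
    sq_nonneg ((V : Matrix (Fin 2) (Fin 2) ℂ) 1 0).re, sq_nonneg ((V : Matrix (Fin 2) (Fin 2) ℂ) 1 0).im]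

/-- The fully entangled fraction of `X₁` equals `1/2`. -/
theorem fef_X₁ : fef 2 X₁ = 1/2 := by
  unfold fef
  apply le_antisymm
  · exact ciSup_le fef_bound
  · have hb : BddAbove (Set.range fun V : Matrix.unitaryGroup (Fin 2) ℂ =>
        (star (psiPlus 2) ⬝ᵥ
          ((((1 : Matrix (Fin 2) (Fin 2) ℂ) ⊗ₖ (V : Matrix (Fin 2) (Fin 2) ℂ))ᴴ * X₁ *
            ((1 : Matrix (Fin 2) (Fin 2) ℂ) ⊗ₖ (V : Matrix (Fin 2) (Fin 2) ℂ))) *ᵥ psiPlus 2)).re) := by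
      refine ⟨1/2, ?_⟩
      rintro x ⟨V, rfl⟩
      exact fef_bound V
    have h1 := le_ciSup hb (1 : Matrix.unitaryGroup (Fin 2) ℂ)
    refine le_trans ?_ h1
    rw [show ((1 : Matrix.unitaryGroup (Fin 2) ℂ) : Matrix (Fin 2) (Fin 2) ℂ) = 1 from rfl, fef_re]
    norm_num [Matrix.one_apply]
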